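/- arXiv:1702.02375 — 6 statements merged into one kernel-verified Lean document; each statement's English description precedes it below -/
import Mathlib

section
/- Let B be a set of positive integers, S ⊆ B finite, and n ∈ ℤ. If U_S(Δ(n)) ∩ W = ∅, then the arithmetic progression n + lcm(S)·ℤ is contained in M_{B ∩ A_S}. -/
open Set MeasureTheory Filter Topology

namespace BFree

/-- The ambient compact group `∏_{b ∈ B} ℤ/bℤ`. -/
abbrev Gspace (B : Set ℕ+) : Type := ∀ b : B, ZMod ((b : ℕ+) : ℕ)

/-- The diagonal embedding `Δ : ℤ → ∏_{b ∈ B} ℤ/bℤ`. -/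
def delta (B : Set ℕ+) : ℤ →+ Gspace B where
  toFun n := fun b => (n : ZMod ((b : ℕ+) : ℕ))
  map_zero' := by funext b; simp
  map_add' m n := by funext b; simp

/-- `H`, the closure of `Δ(ℤ)`, as a (closed) subgroup of `Gspace B`. -/
def Hgrp (B : Set ℕ+) : AddSubgroup (Gspace B) :=
  (delta B).range.topologicalClosure

/-- `H` as a compact topological group. -/
abbrev Hspace (B : Set ℕ+) : Type := ↥(Hgrp B)

instance (B : Set ℕ+) : CompactSpace (Hspace B) :=
  isCompact_iff_compactSpace.mp
    (IsClosed.isCompact (AddSubgroup.isClosed_topologicalClosure _))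

instance (B : Set ℕ+) : BorelSpace (Hspace B) := Subtype.borelSpace _

/-- The window `W = {h ∈ H : h_b ≠ 0 for all b ∈ B}`. -/
def window (B : Set ℕ+) : Set (Hspace B) :=
  {h | ∀ b : B, (h : Gspace B) b ≠ 0}

/-- `Δ(n)` as an element of `H`. -/
def deltaH (B : Set ℕ+) (n : ℤ) : Hspace B :=
  ⟨delta B n, (delta B).range.le_topologicalClosure ⟨n, rfl⟩⟩

/-- The set of multiples `M_B ⊆ ℤ` of a set `B` of positive integers. -/
def MultSet (B : Set ℕ+) : Set ℤ := {n | ∃ b ∈ B, ((b : ℕ) : ℤ) ∣ n}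

/-- The `B`-free set `F_B = ℤ ∖ M_B`. -/
def FreeSet (B : Set ℕ+) : Set ℤ := {n | ∀ b ∈ B, ¬ ((b : ℕ) : ℤ) ∣ n}

/-- Set of multiples of a set of natural numbers. -/
def MultSetN (C : Set ℕ) : Set ℤ := {n | ∃ c ∈ C, (c : ℤ) ∣ n}

/-- Free set of a set of natural numbers. -/
def FreeSetN (C : Set ℕ) : Set ℤ := {n | ∀ c ∈ C, ¬ (c : ℤ) ∣ n}

/-- `#(M ∩ [1, N]) / N`. -/
noncomputable def densSeq (M : Set ℤ) (N : ℕ) : ℝ :=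
  (Nat.card ↥(M ∩ Set.Icc (1 : ℤ) (N : ℤ)) : ℝ) / N

/-- Lower (asymptotic) density of a set of integers. -/
noncomputable def lowerDensity (M : Set ℤ) : ℝ := Filter.liminf (densSeq M) Filter.atTop

/-- Upper (asymptotic) density of a set of integers. -/
noncomputable def upperDensity (M : Set ℤ) : ℝ := Filter.limsup (densSeq M) Filter.atTop

/-- `B` is taut if removing any element strictly decreases the lower density
of the set of multiples. -/
def Taut (B : Set ℕ+) : Prop :=
  ∀ b ∈ B, lowerDensity (MultSet (B \ {b})) < lowerDensity (MultSet B)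

/-- `B` is primitive if no element divides another. -/
def Primitive (B : Set ℕ+) : Prop :=
  ∀ b ∈ B, ∀ b' ∈ B, (b : ℕ) ∣ (b' : ℕ) → b = b'

/-- `lcm(S)` for a finite set of positive integers. -/
def lcmS (S : Finset ℕ+) : ℕ := S.lcm fun b => (b : ℕ)

/-- `A_S = {gcd(b, lcm S) : b ∈ B}`. -/
def ASet (B : Set ℕ+) (S : Finset ℕ+) : Set ℕ :=
  {m | ∃ b ∈ B, m = Nat.gcd (b : ℕ) (lcmS S)}

/-- The cylinder set `U_S(h) ⊆ H`. -/
def cyl (B : Set ℕ+) (S : Finset ℕ+) (hS : ↑S ⊆ B) (h : Hspace B) : Set (Hspace B) :=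
  {h' | ∀ b, ∀ hb : b ∈ S, (h' : Gspace B) ⟨b, hS hb⟩ = (h : Gspace B) ⟨b, hS hb⟩}

/-- `E = ⋃_{S ⊆ B finite} F_{A_S}`. -/
def Eset (B : Set ℕ+) : Set ℤ :=
  ⋃ (S : Finset ℕ+) (_ : ↑S ⊆ B), FreeSetN (ASet B S)

/-- `A_∞`. -/
def Ainfty (B : Set ℕ+) : Set ℕ :=
  {n | ∀ S : Finset ℕ+, ↑S ⊆ B →
    ∃ S' : Finset ℕ+, S ⊆ S' ∧ ↑S' ⊆ B ∧ n ∈ ASet B S' ∧ ∀ b ∈ S', (b : ℕ) ≠ n}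

/-- The indicator `η` of the `B`-free set, as a point of `{0,1}^ℤ`. -/
noncomputable def eta (B : Set ℕ+) : ℤ → Bool :=
  fun n => @decide (n ∈ FreeSet B) (Classical.propDecidable _)

/-- The left shift on `{0,1}^ℤ`, iterated `k` times (`k ∈ ℤ`). -/
def shift (k : ℤ) (x : ℤ → Bool) : ℤ → Bool := fun n => x (n + k)

/-- The orbit closure `X_η` of `η` in `{0,1}^ℤ`. -/
noncomputable def Xeta (B : Set ℕ+) : Set (ℤ → Bool) :=
  closure {x | ∃ k : ℤ, x = shift k (eta B)}


/-- If `U_S(Δ(n)) ∩ W = ∅`, then the arithmetic progression `n + lcm(S)·ℤ`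
is contained in `M_{B ∩ A_S}`. -/
theorem statement14 (B : Set ℕ+) (S : Finset ℕ+) (hS : ↑S ⊆ B) (n : ℤ)
    (hdisj : cyl B S hS (deltaH B n) ∩ window B = ∅) :
    ∀ j : ℤ, ∃ m : ℕ, (∃ b ∈ B, (b : ℕ) = m) ∧ m ∈ ASet B S ∧
      (m : ℤ) ∣ (n + (lcmS S : ℤ) * j) := by
  classical
  -- Step 1: finite subcover
  set K := cyl B S hS (deltaH B n) with hK
  have hKclosed : IsClosed K := by
    have : K = ⋂ (b : ℕ+) (hb : b ∈ S),
        (fun h : Hspace B => (h : Gspace B) ⟨b, hS hb⟩) ⁻¹'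
          {(deltaH B n : Gspace B) ⟨b, hS hb⟩} := by
      ext h
      simp only [hK, cyl, Set.mem_setOf_eq, Set.mem_iInter, Set.mem_preimage,
        Set.mem_singleton_iff]
    rw [this]
    exact isClosed_iInter fun b => isClosed_iInter fun hb =>
      IsClosed.preimage ((continuous_apply _).comp continuous_subtype_val)
        (isClosed_discrete _)
  have hKc : IsCompact K := hKclosed.isCompact
  have hcover : K ⊆ ⋃ b : ↥B, (fun h : Hspace B => (h : Gspace B) b) ⁻¹' {0} := by
    intro h hh
    have hnw : h ∉ window B := fun hw =>
      Set.eq_empty_iff_forall_notMem.mp hdisj h ⟨hh, hw⟩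
    have : ∃ b : ↥B, (h : Gspace B) b = 0 := by
      by_contra hc
      push_neg at hc
      exact hnw hc
    obtain ⟨b, hb⟩ := this
    exact Set.mem_iUnion.mpr ⟨b, hb⟩
  obtain ⟨T, hT⟩ := hKc.elim_finite_subcover
    (fun b : ↥B => (fun h : Hspace B => (h : Gspace B) b) ⁻¹' {0})
    (fun b => IsOpen.preimage ((continuous_apply _).comp continuous_subtype_val)
      (isOpen_discrete _)) hcover
  set L : ℕ := lcmS S with hLdef
  have hLpos : 0 < L := by
    rcases Nat.eq_zero_or_pos L with h0 | h
    · exfalso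
      rw [hLdef, lcmS] at h0
      rcases (Finset.lcm_eq_zero_iff).mp h0 with ⟨b, hb, hb0⟩
      exact (b.2.ne') hb0
    · exact h
  have key : ∀ t : ℤ, (L : ℤ) ∣ (t - n) → ∃ b ∈ T, (((b : ℕ+) : ℕ) : ℤ) ∣ t := by
    intro t ht
    have hmem : deltaH B t ∈ K := by
      intro b hb
      show ((t : ℤ) : ZMod ((b : ℕ+) : ℕ)) = ((n : ℤ) : ZMod ((b : ℕ+) : ℕ))
      rw [ZMod.intCast_eq_intCast_iff]
      have hbL : (((b : ℕ+) : ℕ) : ℤ) ∣ (L : ℤ) := by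
        exact_mod_cast Int.natCast_dvd_natCast.mpr (Finset.dvd_lcm hb)
      exact Int.ModEq.of_dvd hbL (Int.ModEq.symm ((Int.modEq_iff_dvd).mpr ht))
    have := hT hmem
    rw [Set.mem_iUnion₂] at this
    obtain ⟨b, hbT, hb0⟩ := this
    exact ⟨b, hbT, (ZMod.intCast_zmod_eq_zero_iff_dvd t _).mp hb0⟩
  -- Step 2: number theory
  intro j
  set N : ℤ := n + (L : ℤ) * j with hNdef
  set g : ℕ := Int.gcd N (L : ℤ) with hgdef
  have hgN : (g : ℤ) ∣ N := Int.gcd_dvd_left _ _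
  have hgL : (g : ℤ) ∣ (L : ℤ) := Int.gcd_dvd_right _ _
  have hgLnat : g ∣ L := Int.natCast_dvd_natCast.mp hgL
  have hg0 : 0 < g := by
    rw [hgdef]
    exact Int.gcd_pos_iff.mpr (Or.inr (by exact_mod_cast hLpos.ne'))
  set L' : ℕ := L / g with hL'def
  have hL'pos : 0 < L' := Nat.div_pos (Nat.le_of_dvd hLpos hgLnat) hg0
  haveI : NeZero L' := ⟨hL'pos.ne'⟩
  set N' : ℤ := N / (g : ℤ) with hN'def
  have hNfac : N = (g : ℤ) * N' := (Int.mul_ediv_cancel' hgN).symm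
  have hLfac : (L : ℤ) = (g : ℤ) * (L' : ℤ) := by
    rw [hL'def]
    exact_mod_cast (Nat.mul_div_cancel' hgLnat).symm
  have hL'cast : ((L' : ℕ) : ℤ) = (L : ℤ) / (g : ℤ) := by
    rw [hLfac]
    rw [Int.mul_ediv_cancel_left _ (by exact_mod_cast hg0.ne' : (g : ℤ) ≠ 0)]
  have hcop : Int.gcd N' (L' : ℤ) = 1 := by
    rw [hN'def, hL'cast, hgdef]
    exact Int.gcd_div_gcd_div_gcd (by rw [← hgdef]; exact_mod_cast hg0)
  have hunit : IsUnit ((N' : ZMod L')) := by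
    have hc : Nat.Coprime N'.natAbs L' := by
      rwa [Int.gcd] at hcop
    have hu : IsUnit ((N'.natAbs : ℕ) : ZMod L') := (ZMod.isUnit_iff_coprime _ _).mpr hc
    rcases Int.natAbs_eq N' with h | h
    · rw [h, Int.cast_natCast]; exact hu
    · rw [h, Int.cast_neg, Int.cast_natCast]; exact hu.neg
  set Q : ℕ := T.lcm (fun b => ((b : ℕ+) : ℕ)) with hQdef
  obtain ⟨q, hqQ, hqprime, hqmod⟩ :=
    Nat.forall_exists_prime_gt_and_eq_mod (a := (N' : ZMod L')) hunit Q
  have hdvdsub : (L' : ℤ) ∣ ((q : ℤ) - N') := by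
    have h1 : ((q : ℤ) : ZMod L') = (N' : ZMod L') := by push_cast [hqmod]; rfl
    have := (ZMod.intCast_eq_intCast_iff _ _ _).mp h1
    exact dvd_sub_comm.mp this.dvd
  obtain ⟨b, hbT, hbdvd⟩ := key ((g : ℤ) * q) (by
    have h1 : (L : ℤ) ∣ ((g : ℤ) * q - N) := by
      rw [hNfac, ← mul_sub, hLfac]
      exact mul_dvd_mul_left _ hdvdsub
    have h2 : (L : ℤ) ∣ (N - n) := ⟨j, by rw [hNdef]; ring⟩
    have := dvd_add h1 h2
    rwa [sub_add_sub_cancel] at this)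
  have hbQ : ((b : ℕ+) : ℕ) ∣ Q := Finset.dvd_lcm hbT
  have hQpos : 0 < Q := by
    rcases Nat.eq_zero_or_pos Q with h0 | h
    · exfalso
      rcases (Finset.lcm_eq_zero_iff).mp h0 with ⟨c, hc, hc0⟩
      exact ((c : ℕ+).2.ne') hc0
    · exact h
  have hbq : Nat.Coprime ((b : ℕ+) : ℕ) q := by
    have hqb : ¬ q ∣ ((b : ℕ+) : ℕ) := fun hd =>
      absurd (Nat.le_of_dvd (b : ℕ+).2 hd)
        (not_le.mpr (lt_of_le_of_lt (Nat.le_of_dvd hQpos hbQ) hqQ))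
    exact ((Nat.Prime.coprime_iff_not_dvd hqprime).mpr hqb).symm
  have hbg : (((b : ℕ+) : ℕ) : ℤ) ∣ (g : ℤ) :=
    (hbq.isCoprime).dvd_of_dvd_mul_right hbdvd
  have hbL : ((b : ℕ+) : ℕ) ∣ L := Int.natCast_dvd_natCast.mp (hbg.trans hgL)
  refine ⟨((b : ℕ+) : ℕ), ⟨(b : ℕ+), b.2, rfl⟩, ⟨(b : ℕ+), b.2, (Nat.gcd_eq_left hbL).symm⟩, ?_⟩
  exact hbg.trans hgN


end BFree
end

section
/- Let B be an infinite primitive set of positive integers, S ⊆ B finite, and n ∈ ℤ. Then U_S(Δ(n)) ⊆ W if and only if n ∈ F_{A_S}, i.e., no element of A_S divides n. -/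
open Set MeasureTheory Filter Topology

namespace BFree

lemma exists_int_agree {B : Set ℕ+} (h : Gspace B) (hh : h ∈ Hgrp B)
    (T : Finset ℕ+) (hT : ↑T ⊆ B) :
    ∃ m : ℤ, ∀ t, ∀ ht : t ∈ T, (m : ZMod ((t : ℕ+) : ℕ)) = h ⟨t, hT ht⟩ := by
  have hh' : h ∈ closure ((delta B).range : Set (Gspace B)) := hh
  set I : Set B := Subtype.val ⁻¹' (T : Set ℕ+) with hI
  have hIfin : I.Finite := (T : Set ℕ+).toFinite.preimage Subtype.val_injective.injOn
  have hopen : IsOpen (I.pi fun i => ({h i} : Set (ZMod ((i : ℕ+) : ℕ)))) :=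
    isOpen_set_pi hIfin fun _ _ => isOpen_discrete _
  obtain ⟨g, hgO, hg⟩ := mem_closure_iff.mp hh' _ hopen (fun i _ => rfl)
  obtain ⟨m, rfl⟩ := hg
  exact ⟨m, fun t ht => hgO ⟨t, hT ht⟩ ht⟩

/-- For an infinite primitive `B`, finite `S ⊆ B` and `n ∈ ℤ`:
`U_S(Δ(n)) ⊆ W` iff no element of `A_S` divides `n`. -/
theorem statement15 (B : Set ℕ+) (hB : B.Infinite) (hprim : Primitive B)
    (S : Finset ℕ+) (hS : ↑S ⊆ B) (n : ℤ) :
    cyl B S hS (deltaH B n) ⊆ window B ↔ ∀ m ∈ ASet B S, ¬ (m : ℤ) ∣ n := by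
  set L : ℕ := lcmS S with hL
  constructor
  · rintro hsub m ⟨b, hbB, rfl⟩ hdvd
    set d : ℕ := Nat.gcd (b : ℕ) L with hd
    obtain ⟨n', hn'⟩ := hdvd
    set u := Int.gcdA (b : ℕ) (L : ℕ) with hu
    set v := Int.gcdB (b : ℕ) (L : ℕ) with hv
    have hgcd : (d : ℤ) = ((b : ℕ) : ℤ) * u + (L : ℤ) * v := by
      have := Int.gcd_eq_gcd_ab ((b : ℕ) : ℤ) ((L : ℕ) : ℤ)
      rwa [Int.gcd_natCast_natCast] at this
    set x : ℤ := ((b : ℕ) : ℤ) * u * n' with hx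
    have hbx : ((b : ℕ) : ℤ) ∣ x := ⟨u * n', by rw [hx]; ring⟩
    have hLx : (L : ℤ) ∣ x - n := by
      refine ⟨-(v * n'), ?_⟩
      have h1 : x - n = (((b : ℕ) : ℤ) * u - d) * n' := by rw [hx, hn']; ring
      have h2 : ((b : ℕ) : ℤ) * u - d = -((L : ℤ) * v) := by linarith [hgcd]
      rw [h1, h2]; ring
    have hcyl : deltaH B x ∈ cyl B S hS (deltaH B n) := by
      intro s hs
      show ((x : ZMod ((s : ℕ+) : ℕ)) = (n : ZMod ((s : ℕ+) : ℕ)))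
      rw [ZMod.intCast_eq_intCast_iff, Int.modEq_iff_dvd]
      have hsL : ((s : ℕ) : ℤ) ∣ (L : ℤ) :=
        Int.natCast_dvd_natCast.mpr (Finset.dvd_lcm hs)
      exact (dvd_neg.mp (by rw [neg_sub]; exact hsL.trans hLx))
    have hw := hsub hcyl ⟨b, hbB⟩
    exact hw ((ZMod.intCast_zmod_eq_zero_iff_dvd x (b : ℕ)).mpr hbx)
  · intro hA h' hcyl b h0
    obtain ⟨m, hm⟩ := exists_int_agree (h' : Gspace B) h'.2 (insert (b : ℕ+) S)
      (by
        intro t ht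
        rcases Finset.mem_insert.mp ht with h | h
        · exact h ▸ b.2
        · exact hS h)
    have hbm : (((b : ℕ+) : ℕ) : ℤ) ∣ m := by
      have h1 := hm (b : ℕ+) (Finset.mem_insert_self _ _)
      have h2 : (h' : Gspace B) ⟨(b : ℕ+), _⟩ = (h' : Gspace B) b := rfl
      rw [h2, h0] at h1
      exact (ZMod.intCast_zmod_eq_zero_iff_dvd m _).mp h1
    have hLmn : (L : ℤ) ∣ m - n := by
      have hnat : L ∣ (m - n).natAbs := by
        apply Finset.lcm_dvd
        intro s hs
        have h1 := hm s (Finset.mem_insert_of_mem hs)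
        have h2 := hcyl s hs
        have h3 : ((m : ZMod ((s : ℕ+) : ℕ)) = (n : ZMod ((s : ℕ+) : ℕ))) := by
          rw [h1, h2]; rfl
        rw [ZMod.intCast_eq_intCast_iff, Int.modEq_iff_dvd] at h3
        have h4 : ((s : ℕ) : ℤ) ∣ m - n := dvd_neg.mp (by rw [neg_sub]; exact h3)
        exact Int.natCast_dvd_natCast.mp (Int.dvd_natAbs.mpr h4)
      exact (Int.natCast_dvd_natCast.mpr hnat).trans (Int.natAbs_dvd.mpr dvd_rfl)
    set d : ℕ := Nat.gcd ((b : ℕ+) : ℕ) L with hd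
    have hdm : (d : ℤ) ∣ m :=
      (Int.natCast_dvd_natCast.mpr (Nat.gcd_dvd_left _ _)).trans hbm
    have hdn : (d : ℤ) ∣ n := by
      have hdL : (d : ℤ) ∣ m - n :=
        (Int.natCast_dvd_natCast.mpr (Nat.gcd_dvd_right _ _)).trans hLmn
      have := dvd_sub hdm hdL
      simpa using this
    exact hA d ⟨(b : ℕ+), b.2, rfl⟩ hdn

end BFree
end

section
/- Let B be an infinite primitive set of positive integers. Then Δ(ℤ) ∩ (cl(int(W)) \ int(W)) = ∅, i.e., no point of the form Δ(m), m ∈ ℤ, lies in the closure of the interior of W without lying in the interior of W. -/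
open Set MeasureTheory Filter Topology

namespace BFree

/-- Two-modulus CRT: if `gcd p q ∣ a` then there is `x ≡ a (mod p)` with `q ∣ x`. -/
lemma crt_aux (p q a : ℤ) (h : (Int.gcd p q : ℤ) ∣ a) : ∃ x : ℤ, p ∣ x - a ∧ q ∣ x := by
  obtain ⟨t, ht⟩ := h
  refine ⟨t * (q * Int.gcdB p q), ⟨-(t * Int.gcdA p q), ?_⟩, ⟨t * Int.gcdB p q, by ring⟩⟩
  have hb := Int.gcd_eq_gcd_ab p q
  rw [ht, hb]; ring

/-- Integer lcm of a finite set of positive integers. -/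
noncomputable def LZ (S : Finset ℕ+) : ℤ := S.lcm fun s => ((s : ℕ) : ℤ)

/-- For an infinite primitive `B`: `Δ(ℤ) ∩ (cl(int W) ∖ int W) = ∅`. -/
theorem statement16 (B : Set ℕ+) (hB : B.Infinite) (hprim : Primitive B) :
    Set.range (deltaH B) ∩ (closure (interior (window B)) \ interior (window B)) = ∅ := by
  classical
  rw [Set.eq_empty_iff_forall_notMem]
  rintro x ⟨⟨m, rfl⟩, hcl, hnint⟩
  set x := deltaH B m with hxdef
  -- density of `Δ(ℤ)` in `H`, on finite sets of coordinates
  have hdense : ∀ g : Gspace B, g ∈ Hgrp B → ∀ J : Finset ↥B,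
      ∃ n : ℤ, ∀ i ∈ J, ((n : ℤ) : ZMod ((i : ℕ+) : ℕ)) = g i := by
    intro g hg J
    have hg' : g ∈ closure (((delta B).range : AddSubgroup (Gspace B)) : Set (Gspace B)) := hg
    have hO : IsOpen ((J : Set ↥B).pi fun i => ({g i} : Set (ZMod ((i : ℕ+) : ℕ)))) :=
      isOpen_set_pi J.finite_toSet (fun i _ => isOpen_discrete _)
    have hgO : g ∈ (J : Set ↥B).pi fun i => ({g i} : Set (ZMod ((i : ℕ+) : ℕ))) := by
      intro i _; rfl
    obtain ⟨y, hyO, hyR⟩ := (mem_closure_iff.mp hg') _ hO hgO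
    obtain ⟨n, rfl⟩ := hyR
    exact ⟨n, fun i hi => hyO i hi⟩
  -- Step A : all coordinates of x are nonzero
  have hfree : ∀ b ∈ B, ¬ ((b : ℕ) : ℤ) ∣ m := by
    intro b hb hdvd
    have hO : IsOpen {h : Hspace B | (h : Gspace B) ⟨b, hb⟩ = 0} := by
      have : Continuous fun h : Hspace B => (h : Gspace B) ⟨b, hb⟩ :=
        (continuous_apply _).comp continuous_subtype_val
      exact (isOpen_discrete ({0} : Set (ZMod ((b : ℕ+) : ℕ)))).preimage this
    have hxO : x ∈ {h : Hspace B | (h : Gspace B) ⟨b, hb⟩ = 0} := by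
      show ((m : ℤ) : ZMod ((b : ℕ+) : ℕ)) = 0
      exact (ZMod.intCast_zmod_eq_zero_iff_dvd _ _).mpr hdvd
    obtain ⟨h, hhO, hhI⟩ := (mem_closure_iff.mp hcl) _ hO hxO
    exact (interior_subset hhI) ⟨b, hb⟩ hhO
  have hm0 : m ≠ 0 := by
    obtain ⟨b, hb⟩ := hB.nonempty
    intro h0; exact hfree b hb (by rw [h0]; exact dvd_zero _)
  -- consequence of x ∈ closure (interior W)
  have HCL : ∀ S : Finset ℕ+, ↑S ⊆ B → ∃ n : ℤ, ∃ T : Finset ℕ+, S ⊆ T ∧ ↑T ⊆ B ∧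
      (∀ s ∈ S, ((s : ℕ) : ℤ) ∣ n - m) ∧
      (∀ n' : ℤ, (∀ t ∈ T, ((t : ℕ) : ℤ) ∣ n' - n) → ∀ b ∈ B, ¬ ((b : ℕ) : ℤ) ∣ n') := by
    intro S hSB
    set K : Set ↥B := (fun i : ↥B => (i : ℕ+)) ⁻¹' (↑S : Set ℕ+) with hKdef
    have hKfin : K.Finite := S.finite_toSet.preimage (Subtype.val_injective.injOn)
    set V : Set (Hspace B) :=
      Subtype.val ⁻¹' (K.pi fun i => ({((m : ℤ) : ZMod ((i : ℕ+) : ℕ))} :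
        Set (ZMod ((i : ℕ+) : ℕ)))) with hVdef
    have hVopen : IsOpen V :=
      (isOpen_set_pi hKfin (fun i _ => isOpen_discrete _)).preimage continuous_subtype_val
    have hxV : x ∈ V := by intro i _; rfl
    obtain ⟨h, hhV, hhI⟩ := (mem_closure_iff.mp hcl) _ hVopen hxV
    obtain ⟨U, hUW, hUopen, hhU⟩ := mem_interior.mp hhI
    obtain ⟨U', hU'open, hU'pre⟩ := isOpen_induced_iff.mp hUopen
    have hhU' : (h : Gspace B) ∈ U' := by rw [← hU'pre] at hhU; exact hhU
    obtain ⟨I, u, hIu, hpi⟩ := isOpen_pi_iff.mp hU'open _ hhU'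
    set T : Finset ℕ+ := S ∪ I.image (fun i : ↥B => (i : ℕ+)) with hTdef
    have hTB : ↑T ⊆ B := by
      intro b hb
      rcases Finset.mem_union.mp hb with h1 | h2
      · exact hSB h1
      · obtain ⟨i, _, rfl⟩ := Finset.mem_image.mp h2; exact i.2
    set J : Finset ↥B := I ∪ S.subtype (fun x => x ∈ B) with hJdef
    obtain ⟨n, hn⟩ := hdense (h : Gspace B) h.2 J
    refine ⟨n, T, Finset.subset_union_left, hTB, ?_, ?_⟩
    · intro s hs
      have hiJ : (⟨s, hSB hs⟩ : ↥B) ∈ J :=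
        Finset.mem_union_right _ (Finset.mem_subtype.mpr hs)
      have h1 : ((n : ℤ) : ZMod ((s : ℕ+) : ℕ)) = (h : Gspace B) ⟨s, hSB hs⟩ := hn _ hiJ
      have h2 : (h : Gspace B) ⟨s, hSB hs⟩ = ((m : ℤ) : ZMod ((s : ℕ+) : ℕ)) := hhV ⟨s, hSB hs⟩ hs
      have h3 : ((n : ℤ) : ZMod ((s : ℕ+) : ℕ)) = ((m : ℤ) : ZMod ((s : ℕ+) : ℕ)) := h1.trans h2
      have h4 : n ≡ m [ZMOD ((s : ℕ+) : ℕ)] := (ZMod.intCast_eq_intCast_iff _ _ _).mp h3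
      exact dvd_sub_comm.mp (Int.ModEq.dvd h4)
    · intro n' hn' b hbB hbdvd
      have hmem : delta B n' ∈ (↑I : Set ↥B).pi u := by
        intro i hi
        have hiT : (i : ℕ+) ∈ T :=
          Finset.mem_union_right _ (Finset.mem_image.mpr ⟨i, hi, rfl⟩)
        have hd : ((i : ℕ+) : ℕ) ∣ (n' - n).natAbs := Int.natCast_dvd.mp (hn' _ hiT)
        have h5 : ((n' : ℤ) : ZMod ((i : ℕ+) : ℕ)) = ((n : ℤ) : ZMod ((i : ℕ+) : ℕ)) := by
          refine (ZMod.intCast_eq_intCast_iff _ _ _).mpr ?_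
          exact Int.ModEq.symm (Int.modEq_iff_dvd.mpr (hn' _ hiT))
        have h6 : ((n : ℤ) : ZMod ((i : ℕ+) : ℕ)) = (h : Gspace B) i :=
          hn _ (Finset.mem_union_left _ hi)
        have : delta B n' i = (h : Gspace B) i := h5.trans h6
        rw [show delta B n' i = (h : Gspace B) i from this]
        exact (hIu i hi).2
      have hWmem : deltaH B n' ∈ window B := by
        apply hUW
        rw [← hU'pre]
        exact hpi hmem
      have := hWmem ⟨b, hbB⟩
      exact this ((ZMod.intCast_zmod_eq_zero_iff_dvd _ _).mpr hbdvd)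
  -- consequence of x ∉ interior W
  have HNINT : ∀ T : Finset ℕ+, ↑T ⊆ B → ∃ n' : ℤ, ∃ b ∈ B,
      (∀ t ∈ T, ((t : ℕ) : ℤ) ∣ n' - m) ∧ ((b : ℕ) : ℤ) ∣ n' := by
    intro T hTB
    by_contra hcon
    push_neg at hcon
    apply hnint
    set K : Set ↥B := (fun i : ↥B => (i : ℕ+)) ⁻¹' (↑T : Set ℕ+) with hKdef
    have hKfin : K.Finite := T.finite_toSet.preimage (Subtype.val_injective.injOn)
    set V : Set (Hspace B) :=
      Subtype.val ⁻¹' (K.pi fun i => ({((m : ℤ) : ZMod ((i : ℕ+) : ℕ))} :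
        Set (ZMod ((i : ℕ+) : ℕ)))) with hVdef
    have hVopen : IsOpen V :=
      (isOpen_set_pi hKfin (fun i _ => isOpen_discrete _)).preimage continuous_subtype_val
    have hxV : x ∈ V := by intro i _; rfl
    refine mem_interior.mpr ⟨V, ?_, hVopen, hxV⟩
    intro h hhV
    intro b hb0
    set J : Finset ↥B := {b} ∪ T.subtype (fun x => x ∈ B) with hJdef
    obtain ⟨n', hn'⟩ := hdense (h : Gspace B) h.2 J
    have hTd : ∀ t ∈ T, ((t : ℕ) : ℤ) ∣ n' - m := by
      intro t ht
      have hiJ : (⟨t, hTB ht⟩ : ↥B) ∈ J :=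
        Finset.mem_union_right _ (Finset.mem_subtype.mpr ht)
      have h1 : ((n' : ℤ) : ZMod ((t : ℕ+) : ℕ)) = (h : Gspace B) ⟨t, hTB ht⟩ := hn' _ hiJ
      have h2 : (h : Gspace B) ⟨t, hTB ht⟩ = ((m : ℤ) : ZMod ((t : ℕ+) : ℕ)) := hhV ⟨t, hTB ht⟩ ht
      have h4 : n' ≡ m [ZMOD ((t : ℕ+) : ℕ)] :=
        (ZMod.intCast_eq_intCast_iff _ _ _).mp (h1.trans h2)
      exact dvd_sub_comm.mp (Int.ModEq.dvd h4)
    have hbd : (((b : ℕ+) : ℕ) : ℤ) ∣ n' := by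
      have h1 : ((n' : ℤ) : ZMod ((b : ℕ+) : ℕ)) = (h : Gspace B) b :=
        hn' _ (Finset.mem_union_left _ (Finset.mem_singleton_self _))
      rw [hb0] at h1
      exact (ZMod.intCast_zmod_eq_zero_iff_dvd _ _).mp h1
    exact hcon n' (b : ℕ+) b.2 hTd hbd
  -- the key arithmetic step
  have key : ∀ S : {S : Finset ℕ+ // ↑S ⊆ B}, ∃ T : {S : Finset ℕ+ // ↑S ⊆ B},
      (∃ g : ℕ, g ≠ 0 ∧ (g : ℤ) ∣ m ∧ (g : ℤ) ∣ LZ T.1 ∧ ¬ (g : ℤ) ∣ LZ S.1) ∧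
      LZ S.1 ∣ LZ T.1 := by
    rintro ⟨S, hSB⟩
    obtain ⟨n, T, hST, hTB, hnm, hgood⟩ := HCL S hSB
    obtain ⟨n', b, hbB, hn'm, hbn'⟩ := HNINT T hTB
    set g : ℕ := Int.gcd ((b : ℕ) : ℤ) (LZ T) with hgdef
    have hgb : (g : ℤ) ∣ ((b : ℕ) : ℤ) := Int.gcd_dvd_left _ _
    have hgT : (g : ℤ) ∣ LZ T := Int.gcd_dvd_right _ _
    have hLTd : LZ T ∣ n' - m := Finset.lcm_dvd (fun t ht => hn'm t ht)
    have hgm : (g : ℤ) ∣ m := by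
      have h1 : (g : ℤ) ∣ n' := hgb.trans hbn'
      have h2 : (g : ℤ) ∣ n' - m := hgT.trans hLTd
      simpa using h1.sub h2
    have hg0 : g ≠ 0 := by
      intro h0
      have : ((b : ℕ) : ℤ) = 0 := ((Int.gcd_eq_zero_iff).mp h0).1
      simpa using this
    have hLS : LZ S ∣ LZ T := Finset.lcm_dvd (fun s hs => Finset.dvd_lcm (hST hs))
    refine ⟨⟨T, hTB⟩, ⟨g, hg0, hgm, hgT, ?_⟩, hLS⟩
    -- ¬ g ∣ LZ S
    intro hgLS
    have hLSnm : LZ S ∣ n - m := Finset.lcm_dvd (fun s hs => hnm s hs)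
    have hgn : (g : ℤ) ∣ n := by
      have h1 : (g : ℤ) ∣ n - m := hgLS.trans hLSnm
      simpa using h1.add hgm
    have hgn' : (Int.gcd (LZ T) ((b : ℕ) : ℤ) : ℤ) ∣ n := by
      rwa [Int.gcd_comm]
    obtain ⟨y, hy1, hy2⟩ := crt_aux (LZ T) ((b : ℕ) : ℤ) n hgn'
    exact hgood y (fun t ht => (Finset.dvd_lcm ht).trans hy1) b hbB hy2
  choose next hgex hmon using key
  choose gfun hg0 hgm hgT hgS using hgex
  set seq : ℕ → {S : Finset ℕ+ // ↑S ⊆ B} :=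
    fun k => Nat.rec (⟨∅, by simp⟩ : {S : Finset ℕ+ // ↑S ⊆ B}) (fun _ S => next S) k with hseq
  have hseqsucc : ∀ k, seq (k + 1) = next (seq k) := fun k => rfl
  have hmono : ∀ k l, k ≤ l → LZ (seq k).1 ∣ LZ (seq l).1 := by
    intro k l hkl
    induction l, hkl using Nat.le_induction with
    | base => exact dvd_rfl
    | succ l hkl ih => exact ih.trans (by rw [hseqsucc]; exact hmon (seq l))
  have hinj : Function.Injective (fun k => gfun (seq k)) := by
    have haux : ∀ k l, k < l → gfun (seq k) ≠ gfun (seq l) := by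
      intro k l hkl heq
      have h1 : (gfun (seq k) : ℤ) ∣ LZ (seq l).1 := by
        have h2 : (gfun (seq k) : ℤ) ∣ LZ (seq (k + 1)).1 := by
          rw [hseqsucc]; exact hgT (seq k)
        exact h2.trans (hmono (k + 1) l hkl)
      rw [heq] at h1
      exact hgS (seq l) h1
    intro k l heq
    rcases lt_trichotomy k l with h | h | h
    · exact absurd heq (haux k l h)
    · exact h
    · exact absurd heq.symm (haux l k h)
  have hdivmem : ∀ k, gfun (seq k) ∈ m.natAbs.divisors := by
    intro k
    exact Nat.mem_divisors.mpr ⟨Int.natCast_dvd.mp (hgm (seq k)), Int.natAbs_ne_zero.mpr hm0⟩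
  obtain ⟨k, l, hkl, heq⟩ := Finite.exists_ne_map_eq_of_infinite
    (fun k : ℕ => (⟨gfun (seq k), hdivmem k⟩ : m.natAbs.divisors))
  exact hkl (hinj (by simpa using congrArg Subtype.val heq))

end BFree
end

section
/- Let B be an infinite primitive set of positive integers and assume that the closure in H of Δ(ℤ) ∩ W equals W. Then for every b ∈ B and every r with 1 ≤ r ≤ b − 1, the set F_B ∩ (bℤ + r) is nonempty; i.e., the support of η meets every nonzero residue class modulo every b ∈ B. -/
open Set MeasureTheory Filter Topology

namespace BFree

/-- CRT for a finite set of distinct primes. -/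
lemma crt_primes (P : Finset ℕ) (hP : ∀ p ∈ P, p.Prime) (τ : ℕ → ℤ) :
    ∃ t : ℤ, ∀ p ∈ P, (p : ℤ) ∣ (t - τ p) := by
  classical
  induction P using Finset.induction with
  | empty => exact ⟨0, by simp⟩
  | @insert p P hp ih =>
    obtain ⟨t', ht'⟩ := ih (fun q hq => hP q (Finset.mem_insert_of_mem hq))
    have hpp : p.Prime := hP p (Finset.mem_insert_self p P)
    set M : ℤ := ∏ q ∈ P, (q : ℤ) with hM
    have hcop : IsCoprime (p : ℤ) M := by
      have h1 : Nat.Coprime p (∏ q ∈ P, q) := by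
        apply Nat.Coprime.prod_right
        intro q hq
        exact (Nat.coprime_primes hpp (hP q (Finset.mem_insert_of_mem hq))).mpr
          (fun h => hp (h ▸ hq))
      have h2 := Nat.isCoprime_iff_coprime.mpr h1
      simpa [hM, Nat.cast_prod] using h2
    obtain ⟨u, v, huv⟩ := hcop
    refine ⟨τ p * (v * M) + t' * (u * p), ?_⟩
    intro q hq
    rcases Finset.mem_insert.mp hq with rfl | hqP
    · exact ⟨u * (t' - τ q), by linear_combination (τ q) * huv⟩
    · have h1 : (q : ℤ) ∣ M * (v * (τ p - t')) :=
        Dvd.dvd.mul_right (Finset.dvd_prod_of_mem _ hqP) _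
      have h2 : (q : ℤ) ∣ (t' - τ q) := ht' q hqP
      have h3 : τ p * (v * M) + t' * (u * p) - τ q
          = M * (v * (τ p - t')) + (t' - τ q) := by linear_combination t' * huv
      rw [h3]
      exact dvd_add h1 h2

/-- Key finite lemma: there is `n ≡ r (mod b)` divisible by no element of a
given finite subset `S` of `B`. -/
lemma key (B : Set ℕ+) (hprim : Primitive B) (b : ℕ+) (hbB : b ∈ B)
    (r : ℤ) (hr1 : 1 ≤ r) (hr2 : r ≤ ((b : ℕ) : ℤ) - 1) (S : Finset ℕ+) (hS : ↑S ⊆ B) :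
    ∃ n : ℤ, ((b : ℕ) : ℤ) ∣ (n - r) ∧ ∀ b' ∈ S, ¬ (((b' : ℕ) : ℤ) ∣ n) := by
  classical
  set N : ℕ := (b : ℕ) with hNdef
  have hN0 : N ≠ 0 := b.ne_zero
  have hch : ∀ p : ℕ, ∃ τ : ℤ, p.Prime → ((p : ℤ) ^ (N.factorization p) ∣ r) →
      ¬ ((p : ℤ) ∣ (r / (p : ℤ) ^ (N.factorization p)
        + ((N / p ^ (N.factorization p) : ℕ) : ℤ) * τ)) := by
    intro p
    by_cases hp : p.Prime
    · by_cases hd : (p : ℤ) ^ (N.factorization p) ∣ r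
      · haveI : Fact p.Prime := ⟨hp⟩
        set B0n : ℕ := N / p ^ (N.factorization p) with hB0n
        set R : ℤ := r / (p : ℤ) ^ (N.factorization p) with hRdef
        have hB0ne : ((B0n : ℕ) : ZMod p) ≠ 0 := by
          rw [Ne, ZMod.natCast_eq_zero_iff, hB0n]
          exact Nat.not_dvd_ordCompl hp hN0
        set τb : ZMod p :=
          (1 - ((R : ℤ) : ZMod p)) * ((B0n : ℕ) : ZMod p)⁻¹ with hτb
        refine ⟨(τb.val : ℤ), fun _ _ h => ?_⟩
        have hcast : ((R + (B0n : ℤ) * (τb.val : ℤ) : ℤ) : ZMod p) = 0 :=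
          (ZMod.intCast_zmod_eq_zero_iff_dvd _ p).mpr h
        have hone : ((R + (B0n : ℤ) * (τb.val : ℤ) : ℤ) : ZMod p) = 1 := by
          push_cast
          rw [ZMod.natCast_val, ZMod.cast_id, hτb]
          field_simp
          ring
        rw [hone] at hcast
        exact one_ne_zero hcast
      · exact ⟨0, fun _ h => absurd h hd⟩
    · exact ⟨0, fun h => absurd h hp⟩
  choose τ hτ using hch
  set P : Finset ℕ := S.biUnion (fun b' => ((b' : ℕ)).primeFactors) with hPdef
  have hP : ∀ p ∈ P, p.Prime := by
    intro p hpP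
    obtain ⟨b', _, hpb'⟩ := Finset.mem_biUnion.mp hpP
    exact Nat.prime_of_mem_primeFactors hpb'
  obtain ⟨t, ht⟩ := crt_primes P hP τ
  refine ⟨r + (N : ℤ) * t, ⟨t, by ring⟩, ?_⟩
  have claim1 : ∀ p ∈ P, ¬ ((p : ℤ) ^ (N.factorization p + 1) ∣ (r + (N : ℤ) * t)) := by
    intro p hpP hdvd
    have hp := hP p hpP
    by_cases hd : (p : ℤ) ^ (N.factorization p) ∣ r
    · have h2 : (p : ℤ) ^ (N.factorization p) * ((N / p ^ (N.factorization p) : ℕ) : ℤ)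
          = (N : ℤ) := by
        have h0 := Nat.ordProj_mul_ordCompl_eq_self N p
        exact_mod_cast congrArg (fun x : ℕ => (x : ℤ)) h0
      have hrw : r + (N : ℤ) * t
          = (p : ℤ) ^ (N.factorization p)
            * (r / (p : ℤ) ^ (N.factorization p)
              + ((N / p ^ (N.factorization p) : ℕ) : ℤ) * t) := by
        rw [mul_add, Int.mul_ediv_cancel' hd, ← mul_assoc, h2]
      rw [hrw, pow_succ] at hdvd
      have hpne : ((p : ℤ) ^ (N.factorization p)) ≠ 0 :=
        pow_ne_zero _ (by exact_mod_cast hp.ne_zero)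
      have hdvd' : (p : ℤ) ∣ (r / (p : ℤ) ^ (N.factorization p)
          + ((N / p ^ (N.factorization p) : ℕ) : ℤ) * t) :=
        (mul_dvd_mul_iff_left hpne).mp hdvd
      have hsplit : r / (p : ℤ) ^ (N.factorization p)
            + ((N / p ^ (N.factorization p) : ℕ) : ℤ) * t
          = (r / (p : ℤ) ^ (N.factorization p)
              + ((N / p ^ (N.factorization p) : ℕ) : ℤ) * τ p)
            + ((N / p ^ (N.factorization p) : ℕ) : ℤ) * (t - τ p) := by ring
      have hdvd'' : (p : ℤ) ∣ (r / (p : ℤ) ^ (N.factorization p)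
          + ((N / p ^ (N.factorization p) : ℕ) : ℤ) * τ p) := by
        have h3 : (p : ℤ) ∣ ((N / p ^ (N.factorization p) : ℕ) : ℤ) * (t - τ p) :=
          Dvd.dvd.mul_left (ht p hpP) _
        have h4 := dvd_sub hdvd' h3
        rw [hsplit] at h4
        simpa using h4
      exact hτ p hp hd hdvd''
    · have h1 : (p : ℤ) ^ (N.factorization p) ∣ (r + (N : ℤ) * t) :=
        dvd_trans (pow_dvd_pow _ (Nat.le_succ _)) hdvd
      have h2 : (p : ℤ) ^ (N.factorization p) ∣ (N : ℤ) * t := by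
        have h0 : (p ^ (N.factorization p) : ℕ) ∣ N := Nat.ordProj_dvd N p
        exact Dvd.dvd.mul_right (by exact_mod_cast Int.natCast_dvd_natCast.mpr h0) t
      have h5 : (p : ℤ) ^ (N.factorization p) ∣ r := by
        have h6 := dvd_sub h1 h2
        simpa using h6
      exact hd h5
  intro b' hb'S hdvd
  by_cases hdiv : (b' : ℕ) ∣ N
  · have hbb : b' = b := hprim b' (hS hb'S) b hbB hdiv
    subst hbb
    have hr0 : (0 : ℤ) < r := hr1
    have h7 : ((b' : ℕ) : ℤ) ∣ r := by
      have h1 : ((b' : ℕ) : ℤ) ∣ ((N : ℤ) * t) := ⟨t, by rw [hNdef]⟩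
      have h8 := dvd_sub hdvd h1
      simpa using h8
    have := Int.le_of_dvd hr0 h7
    omega
  · have hb'0 : (b' : ℕ) ≠ 0 := b'.ne_zero
    have hnle : ¬ ((b' : ℕ).factorization ≤ N.factorization) := by
      rw [Nat.factorization_le_iff_dvd hb'0 hN0]
      exact hdiv
    rw [Finsupp.le_def] at hnle
    push_neg at hnle
    obtain ⟨p, hpgt⟩ := hnle
    have hmem : p ∈ ((b' : ℕ)).primeFactors := by
      rw [← Nat.support_factorization]
      exact Finsupp.mem_support_iff.mpr (by omega)
    have hpP : p ∈ P := Finset.mem_biUnion.mpr ⟨b', hb'S, hmem⟩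
    have hk : N.factorization p + 1 ≤ (b' : ℕ).factorization p := hpgt
    have h1 : (p ^ (N.factorization p + 1) : ℕ) ∣ (b' : ℕ) :=
      dvd_trans (pow_dvd_pow p hk) (Nat.ordProj_dvd _ p)
    have h2 : ((p : ℤ)) ^ (N.factorization p + 1) ∣ (r + (N : ℤ) * t) := by
      have h3 := dvd_trans (Int.natCast_dvd_natCast.mpr h1) hdvd
      exact_mod_cast h3
    exact claim1 p hpP h2

/-- If `B` is infinite and primitive and the closure of `Δ(ℤ) ∩ W` in `H`
equals `W`, then for every `b ∈ B` and every `r` with `1 ≤ r ≤ b − 1`, the set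
`F_B ∩ (bℤ + r)` is nonempty. -/
theorem statement17 (B : Set ℕ+) (hB : B.Infinite) (hprim : Primitive B)
    (hdense : closure (Set.range (deltaH B) ∩ window B) = window B) :
    ∀ b ∈ B, ∀ r : ℤ, 1 ≤ r → r ≤ ((b : ℕ) : ℤ) - 1 →
      ∃ n ∈ FreeSet B, ((b : ℕ) : ℤ) ∣ (n - r) := by
  intro b hbB r hr1 hr2
  classical
  haveI : ∀ i : ↥B, NeZero (((i : ℕ+) : ℕ)) := fun i => ⟨(i : ℕ+).ne_zero⟩
  let ev : (i : ↥B) → Hspace B → ZMod ((i : ℕ+) : ℕ) := fun i h => (h : Gspace B) i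
  have hev : ∀ i, Continuous (ev i) := fun i =>
    (continuous_apply i).comp continuous_subtype_val
  let bB : ↥B := ⟨b, hbB⟩
  let C : Finset ↥B → Set (Hspace B) := fun T =>
    (ev bB ⁻¹' {((r : ZMod ((b : ℕ+) : ℕ)))}) ∩ ⋂ i ∈ T, (ev i ⁻¹' ({0}ᶜ))
  have hCclosed : ∀ T, IsClosed (C T) := by
    intro T
    exact (IsClosed.preimage (hev bB) isClosed_singleton).inter
      (isClosed_biInter fun i _ =>
        IsClosed.preimage (hev i) ((isOpen_discrete {0}).isClosed_compl))
  have hCne : ∀ T, (C T).Nonempty := by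
    intro T
    have hsub : ↑(insert b (T.image (fun i : ↥B => (i : ℕ+)))) ⊆ B := by
      intro x hx
      simp only [Finset.coe_insert, Set.mem_insert_iff, Finset.coe_image,
        Set.mem_image, Finset.mem_coe] at hx
      rcases hx with rfl | ⟨i, _, rfl⟩
      · exact hbB
      · exact i.2
    obtain ⟨n, hn1, hn2⟩ := key B hprim b hbB r hr1 hr2
      (insert b (T.image (fun i : ↥B => (i : ℕ+)))) hsub
    refine ⟨deltaH B n, ?_, ?_⟩
    · refine Set.mem_preimage.mpr ?_
      have heq : ev bB (deltaH B n) = ((r : ZMod ((b : ℕ+) : ℕ))) := by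
        show ((n : ZMod ((b : ℕ+) : ℕ))) = _
        exact (ZMod.intCast_eq_intCast_iff n r _).mpr
          (Int.ModEq.symm (Int.modEq_iff_dvd.mpr hn1))
      simp [heq]
    · refine Set.mem_iInter₂.mpr fun i hi => ?_
      have hni : ¬ (((i : ℕ+) : ℕ) : ℤ) ∣ n :=
        hn2 (i : ℕ+) (Finset.mem_insert_of_mem (Finset.mem_image_of_mem _ hi))
      simp only [Set.mem_preimage, Set.mem_compl_iff, Set.mem_singleton_iff]
      show ¬ ((n : ZMod ((i : ℕ+) : ℕ)) = 0)
      exact fun h0 => hni ((ZMod.intCast_zmod_eq_zero_iff_dvd n _).mp h0)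
  have hdir : Directed (· ⊇ ·) C := by
    intro T T'
    refine ⟨T ∪ T', ?_, ?_⟩
    · intro h hh
      exact ⟨hh.1, Set.mem_iInter₂.mpr fun i hi =>
        Set.mem_iInter₂.mp hh.2 i (Finset.mem_union_left _ hi)⟩
    · intro h hh
      exact ⟨hh.1, Set.mem_iInter₂.mpr fun i hi =>
        Set.mem_iInter₂.mp hh.2 i (Finset.mem_union_right _ hi)⟩
  obtain ⟨w, hw⟩ :=
    IsCompact.nonempty_iInter_of_directed_nonempty_isCompact_isClosed C hdir hCne
      (fun T => (hCclosed T).isCompact) hCclosed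
  have hwmem : ∀ T, w ∈ C T := fun T => Set.mem_iInter.mp hw T
  have hwwin : w ∈ window B := by
    intro i
    have h1 := (hwmem {i}).2
    have h2 := Set.mem_iInter₂.mp h1 i (Finset.mem_singleton_self i)
    simpa using h2
  have hwr : ev bB w = ((r : ZMod ((b : ℕ+) : ℕ))) := (hwmem ∅).1
  rw [← hdense] at hwwin
  have hU : IsOpen (ev bB ⁻¹' {((r : ZMod ((b : ℕ+) : ℕ)))}) :=
    IsOpen.preimage (hev bB) (isOpen_discrete _)
  obtain ⟨h', hh'⟩ := _root_.mem_closure_iff.mp hwwin _ hU hwr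
  obtain ⟨hh'U, ⟨⟨m, hm⟩, h'win⟩⟩ := hh'
  refine ⟨m, ?_, ?_⟩
  · intro c hcB hdvd
    have h1 := h'win ⟨c, hcB⟩
    rw [← hm] at h1
    exact h1 ((ZMod.intCast_zmod_eq_zero_iff_dvd m _).mpr hdvd)
  · have h1 : ev bB h' = ((r : ZMod ((b : ℕ+) : ℕ))) := hh'U
    rw [← hm] at h1
    have h2 : ((m : ZMod ((b : ℕ+) : ℕ))) = ((r : ZMod ((b : ℕ+) : ℕ))) := h1
    have h3 := (ZMod.intCast_eq_intCast_iff m r _).mp h2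
    exact Int.ModEq.dvd h3.symm


end BFree
end

section
/- Let B be an infinite primitive set of positive integers. Then E = F_{B ∪ A_∞} = F_B ∩ F_{A_∞}; that is, an integer n lies in F_{A_S} for some finite S ⊆ B if and only if no element of B and no element of A_∞ divides n. -/
open Set MeasureTheory Filter Topology

namespace BFree

lemma lcmS_dvd_lcmS {S S' : Finset ℕ+} (h : S ⊆ S') : lcmS S ∣ lcmS S' :=
  Finset.lcm_dvd fun b hb => Finset.dvd_lcm (h hb)

lemma key_s18 (B : Set ℕ+) (hne : B.Nonempty) :
    Eset B = FreeSet B ∩ FreeSetN (Ainfty B) := by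
  ext n
  constructor
  · intro hn
    rw [Eset, Set.mem_iUnion] at hn
    obtain ⟨S, hn⟩ := hn
    rw [Set.mem_iUnion] at hn
    obtain ⟨hS, hfree⟩ := hn
    constructor
    · intro b hb hdvd
      exact hfree (Nat.gcd (b : ℕ) (lcmS S)) ⟨b, hb, rfl⟩
        (dvd_trans (Int.natCast_dvd_natCast.mpr (Nat.gcd_dvd_left _ _)) hdvd)
    · intro a ha hdvd
      obtain ⟨S', hSS', hS'B, ⟨b, hb, hab⟩, -⟩ := ha S hS
      have h1 : Nat.gcd (b : ℕ) (lcmS S) ∣ a := by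
        rw [hab]
        exact Nat.dvd_gcd (Nat.gcd_dvd_left _ _)
          (dvd_trans (Nat.gcd_dvd_right _ _) (lcmS_dvd_lcmS hSS'))
      exact hfree (Nat.gcd (b : ℕ) (lcmS S)) ⟨b, hb, rfl⟩
        (dvd_trans (Int.natCast_dvd_natCast.mpr h1) hdvd)
  · rintro ⟨hFB, hFA⟩
    have hn0 : n ≠ 0 := by
      obtain ⟨b, hb⟩ := hne
      intro h; exact hFB b hb (h ▸ dvd_zero _)
    by_contra hE
    have hall : ∀ S : Finset ℕ+, ↑S ⊆ B → ∃ d ∈ ASet B S, (d : ℤ) ∣ n := by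
      intro S hS
      by_contra hc
      push_neg at hc
      exact hE (Set.mem_iUnion.mpr ⟨S, Set.mem_iUnion.mpr ⟨hS,
        fun c hc' hdvd => hc c hc' hdvd⟩⟩)
    -- find a divisor d of n appearing in A_{S'} for cofinally many S'
    have hdiv : ∃ d : ℕ, (d : ℤ) ∣ n ∧
        ∀ S : Finset ℕ+, ↑S ⊆ B → ∃ S', S ⊆ S' ∧ ↑S' ⊆ B ∧ d ∈ ASet B S' := by
      by_contra hc
      push_neg at hc
      have hc' : ∀ d ∈ n.natAbs.divisors, ∃ Sd : Finset ℕ+, ↑Sd ⊆ B ∧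
          ∀ S', Sd ⊆ S' → ↑S' ⊆ B → d ∉ ASet B S' := by
        intro d hd
        have hdd : (d : ℤ) ∣ n := by
          have := Nat.mem_divisors.mp hd |>.1
          exact (Int.natAbs_dvd_natAbs.mp (by simpa using this))
        obtain ⟨S, hSB, hS⟩ := hc d hdd
        refine ⟨S, hSB, fun S' hsub hS'B hmem => ?_⟩
        exact (hS S' hsub hS'B hmem).elim
      choose f hf1 hf2 using hc'
      set Sstar : Finset ℕ+ := n.natAbs.divisors.attach.biUnion
        (fun x => f x.1 x.2) with hSstar
      have hSstarB : ↑Sstar ⊆ B := by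
        intro b hb
        simp only [hSstar, Finset.coe_biUnion, Set.mem_iUnion] at hb
        obtain ⟨x, -, hx⟩ := hb
        exact hf1 x.1 x.2 hx
      obtain ⟨d0, hd0A, hd0n⟩ := hall Sstar hSstarB
      have hd0D : d0 ∈ n.natAbs.divisors := by
        rw [Nat.mem_divisors]
        refine ⟨?_, Int.natAbs_ne_zero.mpr hn0⟩
        have := Int.natAbs_dvd_natAbs.mpr hd0n
        simpa using this
      have hsub : f d0 hd0D ⊆ Sstar := by
        intro b hb
        exact Finset.mem_biUnion.mpr ⟨⟨d0, hd0D⟩, Finset.mem_attach _ _, hb⟩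
      exact hf2 d0 hd0D Sstar hsub hSstarB hd0A
    obtain ⟨d, hdn, hdP⟩ := hdiv
    by_cases hdB : ∃ b ∈ B, (b : ℕ) = d
    · obtain ⟨b, hb, rfl⟩ := hdB
      exact hFB b hb hdn
    · push_neg at hdB
      refine hFA d ?_ hdn
      intro S hS
      obtain ⟨S', hSS', hS'B, hdA⟩ := hdP S hS
      exact ⟨S', hSS', hS'B, hdA, fun b hb => hdB b (hS'B hb)⟩

/-- For an infinite primitive `B`: `E = F_{B ∪ A_∞} = F_B ∩ F_{A_∞}`. -/
theorem statement18 (B : Set ℕ+) (hB : B.Infinite) (hprim : Primitive B) :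
    Eset B = FreeSetN ((fun b : ℕ+ => (b : ℕ)) '' B ∪ Ainfty B) ∧
    Eset B = FreeSet B ∩ FreeSetN (Ainfty B) := by
  have h2 : Eset B = FreeSet B ∩ FreeSetN (Ainfty B) := key_s18 B hB.nonempty
  refine ⟨?_, h2⟩
  rw [h2]
  ext n
  simp only [FreeSetN, FreeSet, Set.mem_inter_iff, Set.mem_setOf_eq,
    Set.mem_union, Set.mem_image]
  constructor
  · rintro ⟨h1, h2⟩ c (⟨b, hb, rfl⟩ | hc)
    · exact h1 b hb
    · exact h2 c hc
  · intro h
    exact ⟨fun b hb => h _ (Or.inl ⟨b, hb, rfl⟩), fun c hc => h c (Or.inr hc)⟩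

end BFree
end

section
/- Let B be an infinite set of positive integers and let S_1 ⊆ S_2 ⊆ … be a filtration of B by finite sets with ⋃_k S_k = B. For each k let c_k be the least positive integer c such that c + M_{A_{S_k}} = M_{A_{S_k}}. Then the period group H_{int(W)} = {h ∈ H : int(W) + h = int(W)} is trivial (equals {0}) if and only if for every b ∈ B there exists n ≥ 1 such that b divides c_n. -/
open Set MeasureTheory Filter Topology

namespace BFree

/-! ### Auxiliary lemmas -/

section Aux

variable {B : Set ℕ+}

instance (b : ℕ+) : NeZero ((b : ℕ+) : ℕ) := ⟨b.ne_zero⟩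

lemma lcmS_pos (S : Finset ℕ+) : 0 < lcmS S := by
  refine Nat.pos_of_ne_zero fun h => ?_
  rw [lcmS, Finset.lcm_eq_zero_iff] at h
  obtain ⟨b, _, hb⟩ := h
  exact b.ne_zero hb

lemma dvd_lcmS {b : ℕ+} {S : Finset ℕ+} (hb : b ∈ S) : (b : ℕ) ∣ lcmS S :=
  Finset.dvd_lcm hb

lemma lcmS_dvd_of_subset {S T : Finset ℕ+} (h : S ⊆ T) : lcmS S ∣ lcmS T :=
  Finset.lcm_dvd fun b hb => dvd_lcmS (h hb)

lemma lcm_int_dvd {S : Finset ℕ+} {z : ℤ} (h : ∀ b ∈ S, ((b : ℕ) : ℤ) ∣ z) :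
    ((lcmS S : ℕ) : ℤ) ∣ z := by
  rw [Int.natCast_dvd]
  exact Finset.lcm_dvd fun b hb => Int.natCast_dvd.mp (h b hb)

lemma exists_crt (p q n1 n2 : ℤ) (h : (Int.gcd p q : ℤ) ∣ n1 - n2) :
    ∃ m : ℤ, p ∣ m - n1 ∧ q ∣ m - n2 := by
  obtain ⟨s, hs⟩ := h
  have hg := Int.gcd_eq_gcd_ab p q
  refine ⟨n1 - s * Int.gcdA p q * p, ⟨-(s * Int.gcdA p q), by ring⟩,
    ⟨s * Int.gcdB p q, ?_⟩⟩
  linear_combination hs + s * hg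

lemma dvd_shift {g a b : ℤ} (h : g ∣ a - b) : g ∣ a ↔ g ∣ b :=
  ⟨fun ha => by simpa using dvd_sub ha h, fun hb => by simpa using dvd_add hb h⟩

lemma exists_lift (S : Finset ℕ+) (hS : ↑S ⊆ B) (x : Hspace B) :
    ∃ t : ℤ, ∀ b (hb : b ∈ S), (x : Gspace B) ⟨b, hS hb⟩ = ((t : ℤ) : ZMod ((b : ℕ+) : ℕ)) := by
  have hLpos : 0 < lcmS S := lcmS_pos S
  set L : ℕ := lcmS S with hLdef
  let Cyl : ℤ → Set (Gspace B) := fun t =>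
    {g | ∀ b (hb : b ∈ S), g ⟨b, hS hb⟩ = ((t : ℤ) : ZMod ((b : ℕ+) : ℕ))}
  have hCyl_closed : ∀ t : ℤ, IsClosed (Cyl t) := by
    intro t
    have : Cyl t = ⋂ (b : ℕ+) (hb : b ∈ S),
        (fun g : Gspace B => g ⟨b, hS hb⟩) ⁻¹' {((t : ℤ) : ZMod ((b : ℕ+) : ℕ))} := by
      ext g
      simp only [Cyl, Set.mem_setOf_eq, Set.mem_iInter, Set.mem_preimage, Set.mem_singleton_iff]
    rw [this]
    exact isClosed_iInter fun b => isClosed_iInter fun hb =>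
      IsClosed.preimage (continuous_apply _) isClosed_singleton
  have hC_closed : IsClosed (⋃ t : Fin L, Cyl ((t : ℕ) : ℤ)) :=
    isClosed_iUnion_of_finite fun t => hCyl_closed _
  have hrange : ((delta B).range : Set (Gspace B)) ⊆ ⋃ t : Fin L, Cyl ((t : ℕ) : ℤ) := by
    rintro _ ⟨n, rfl⟩
    have hL0 : (L : ℤ) ≠ 0 := by exact_mod_cast hLpos.ne'
    have h1 : (0:ℤ) ≤ n % (L:ℤ) := Int.emod_nonneg n hL0
    have h2 : n % (L:ℤ) < L := Int.emod_lt_of_pos n (by exact_mod_cast hLpos)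
    refine Set.mem_iUnion.2 ⟨⟨(n % (L:ℤ)).toNat, by omega⟩, ?_⟩
    intro b hb
    have hbL : ((b:ℕ):ℤ) ∣ (L:ℤ) := Int.natCast_dvd_natCast.2 (dvd_lcmS hb)
    have htn : (((n % (L:ℤ)).toNat : ℕ) : ℤ) = n % (L:ℤ) := Int.toNat_of_nonneg h1
    show ((n : ℤ) : ZMod ((b:ℕ+):ℕ)) = _
    rw [htn, ZMod.intCast_eq_intCast_iff]
    exact (Int.emod_emod_of_dvd n hbL).symm
  have hxC : (x : Gspace B) ∈ ⋃ t : Fin L, Cyl ((t : ℕ) : ℤ) :=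
    closure_minimal hrange hC_closed x.2
  obtain ⟨t, ht⟩ := Set.mem_iUnion.1 hxC
  exact ⟨((t : ℕ) : ℤ), ht⟩

lemma lift_unique {S : Finset ℕ+} (hS : ↑S ⊆ B) (x : Hspace B) {t t' : ℤ}
    (h1 : ∀ b (hb : b ∈ S), (x : Gspace B) ⟨b, hS hb⟩ = ((t : ℤ) : ZMod ((b : ℕ+) : ℕ)))
    (h2 : ∀ b (hb : b ∈ S), (x : Gspace B) ⟨b, hS hb⟩ = ((t' : ℤ) : ZMod ((b : ℕ+) : ℕ))) :
    ((lcmS S : ℕ) : ℤ) ∣ t - t' := by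
  apply lcm_int_dvd
  intro b hb
  have h3 : ((t : ℤ) : ZMod ((b:ℕ+):ℕ)) = ((t' : ℤ) : ZMod ((b:ℕ+):ℕ)) :=
    (h1 b hb).symm.trans (h2 b hb)
  rw [ZMod.intCast_eq_intCast_iff] at h3
  exact Int.ModEq.dvd h3.symm

lemma mem_MultSetN_ASet {S : Finset ℕ+} {n : ℤ} :
    n ∈ MultSetN (ASet B S) ↔ ∃ b ∈ B, ((Nat.gcd (b : ℕ) (lcmS S) : ℕ) : ℤ) ∣ n := by
  constructor
  · rintro ⟨c, ⟨b, hb, rfl⟩, hdvd⟩; exact ⟨b, hb, hdvd⟩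
  · rintro ⟨b, hb, h⟩; exact ⟨_, ⟨b, hb, rfl⟩, h⟩

lemma MultSetN_congr {S : Finset ℕ+} {n n' : ℤ} (h : ((lcmS S : ℕ) : ℤ) ∣ n - n') :
    n ∈ MultSetN (ASet B S) ↔ n' ∈ MultSetN (ASet B S) := by
  rw [mem_MultSetN_ASet, mem_MultSetN_ASet]
  refine exists_congr fun b => and_congr_right fun hb => ?_
  exact dvd_shift (dvd_trans (Int.natCast_dvd_natCast.2 (Nat.gcd_dvd_right _ _)) h)

/-- `V_S`: points of `H` whose lift over `S` avoids all `gcd(b, lcm S)`. -/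
def Vset (B : Set ℕ+) (S : Finset ℕ+) (hS : ↑S ⊆ B) : Set (Hspace B) :=
  {x | ∃ t : ℤ, (∀ b (hb : b ∈ S), (x : Gspace B) ⟨b, hS hb⟩ = ((t : ℤ) : ZMod ((b : ℕ+) : ℕ)))
      ∧ t ∉ MultSetN (ASet B S)}

lemma Vset_subset_window {S : Finset ℕ+} (hS : ↑S ⊆ B) : Vset B S hS ⊆ window B := by
  rintro x ⟨t, hlift, hfree⟩ b
  intro h0
  have hS' : ↑(insert (b : ℕ+) S) ⊆ B := by
    intro c hc
    rcases Finset.mem_insert.1 hc with h | h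
    · exact h ▸ b.2
    · exact hS h
  obtain ⟨t', hlift'⟩ := exists_lift (insert (↑b) S) hS' x
  have hxb : (x : Gspace B) b = ((t' : ℤ) : ZMod ((b : ℕ+) : ℕ)) :=
    hlift' (↑b) (Finset.mem_insert_self _ _)
  have hbt' : (((b : ℕ+) : ℕ) : ℤ) ∣ t' := by
    rw [hxb] at h0
    exact (ZMod.intCast_zmod_eq_zero_iff_dvd t' _).1 h0
  have htt' : ((lcmS S : ℕ) : ℤ) ∣ t - t' :=
    lift_unique hS x hlift (fun c hc => hlift' c (Finset.mem_insert_of_mem hc))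
  apply hfree
  rw [mem_MultSetN_ASet]
  refine ⟨(b : ℕ+), b.2, ?_⟩
  have h1 : ((Nat.gcd ((b:ℕ+):ℕ) (lcmS S) : ℕ) : ℤ) ∣ t' :=
    dvd_trans (Int.natCast_dvd_natCast.2 (Nat.gcd_dvd_left _ _)) hbt'
  have h2 : ((Nat.gcd ((b:ℕ+):ℕ) (lcmS S) : ℕ) : ℤ) ∣ t - t' :=
    dvd_trans (Int.natCast_dvd_natCast.2 (Nat.gcd_dvd_right _ _)) htt'
  simpa using dvd_add h1 h2

lemma isOpen_Vset {S : Finset ℕ+} (hS : ↑S ⊆ B) : IsOpen (Vset B S hS) := by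
  have heq : Vset B S hS = Subtype.val ⁻¹' (⋃ (t : ℤ) (_ : t ∉ MultSetN (ASet B S)),
      {g : Gspace B | ∀ b (hb : b ∈ S), g ⟨b, hS hb⟩ = ((t:ℤ) : ZMod ((b : ℕ+) : ℕ))}) := by
    ext x
    simp only [Vset, Set.mem_preimage, Set.mem_iUnion, Set.mem_setOf_eq]
    tauto
  rw [heq]
  refine IsOpen.preimage continuous_subtype_val ?_
  refine isOpen_iUnion fun t => isOpen_iUnion fun _ => ?_
  have : {g : Gspace B | ∀ b (hb : b ∈ S), g ⟨b, hS hb⟩ = ((t:ℤ) : ZMod ((b : ℕ+) : ℕ))} =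
      ⋂ (b : {b : ℕ+ // b ∈ S}),
        (fun g : Gspace B => g ⟨b.1, hS b.2⟩) ⁻¹' {((t:ℤ) : ZMod ((b.1 : ℕ+) : ℕ))} := by
    ext g
    simp only [Set.mem_setOf_eq, Set.mem_iInter, Set.mem_preimage, Set.mem_singleton_iff]
    exact ⟨fun h b => h b.1 b.2, fun h b hb => h ⟨b, hb⟩⟩
  rw [this]
  exact isOpen_iInter_of_finite fun b =>
    IsOpen.preimage (continuous_apply _) (isOpen_discrete _)

lemma Vset_subset_interior {S : Finset ℕ+} (hS : ↑S ⊆ B) :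
    Vset B S hS ⊆ interior (window B) :=
  interior_maximal (Vset_subset_window hS) (isOpen_Vset hS)


lemma exists_S_superset {S : ℕ → Finset ℕ+} (hmono : Monotone S)
    (T : Finset ℕ+) (hT : ∀ b ∈ T, ∃ k, b ∈ S k) : ∃ k, T ⊆ S k := by
  classical
  revert hT
  induction T using Finset.induction_on with
  | empty => exact fun _ => ⟨0, Finset.empty_subset _⟩
  | @insert a T ha ih =>
    intro hT
    obtain ⟨k1, hk1⟩ := ih fun b hb => hT b (Finset.mem_insert_of_mem hb)
    obtain ⟨k2, hk2⟩ := hT a (Finset.mem_insert_self _ _)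
    refine ⟨max k1 k2, fun b hb => ?_⟩
    rcases Finset.mem_insert.1 hb with rfl | hb
    · exact hmono (le_max_right k1 k2) hk2
    · exact hmono (le_max_left k1 k2) (hk1 hb)

lemma interior_window_eq (S : ℕ → Finset ℕ+) (hmono : ∀ k, S k ⊆ S (k + 1))
    (hsub : ∀ k, ↑(S k) ⊆ B) (hcover : ∀ b ∈ B, ∃ k, b ∈ S k) :
    interior (window B) = ⋃ k, Vset B (S k) (hsub k) := by
  apply subset_antisymm
  · intro x hx
    have hxn : window B ∈ 𝓝 x := mem_interior_iff_mem_nhds.1 hx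
    rw [nhds_subtype] at hxn
    obtain ⟨U, hU, hUsub⟩ := Filter.mem_comap.1 hxn
    rw [nhds_pi] at hU
    obtain ⟨I, hIfin, V, hV, hVsub⟩ := Filter.mem_pi.1 hU
    classical
    obtain ⟨k, hk⟩ := exists_S_superset (monotone_nat_of_le_succ hmono)
      (Finset.image (fun b : ↥B => (b : ℕ+)) hIfin.toFinset)
      (by
        intro b hb
        rw [Finset.mem_image] at hb
        obtain ⟨i, _, rfl⟩ := hb
        exact hcover (↑i) i.2)
    obtain ⟨t, ht⟩ := exists_lift (S k) (hsub k) x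
    refine Set.mem_iUnion.2 ⟨k, t, ht, ?_⟩
    intro hmem
    obtain ⟨b0, hb0, hdvd⟩ := mem_MultSetN_ASet.1 hmem
    have hcompat : (Int.gcd ((lcmS (S k) : ℕ) : ℤ) (((b0 : ℕ+) : ℕ) : ℤ) : ℤ) ∣ t - 0 := by
      rw [Int.gcd_natCast_natCast, Nat.gcd_comm]
      simpa using hdvd
    obtain ⟨m, hm1, hm2⟩ := exists_crt _ _ t 0 hcompat
    have hδU : delta B m ∈ U := by
      apply hVsub
      intro i hi
      have hiT : (i : ℕ+) ∈ S k :=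
        hk (Finset.mem_image.2 ⟨i, hIfin.mem_toFinset.2 hi, rfl⟩)
      have h2 : ((m : ℤ) : ZMod ((i : ℕ+) : ℕ)) = ((t : ℤ) : ZMod ((i : ℕ+) : ℕ)) := by
        rw [ZMod.intCast_eq_intCast_iff]
        refine Int.ModEq.symm (Int.modEq_iff_dvd.2 ?_)
        exact dvd_trans (Int.natCast_dvd_natCast.2 (dvd_lcmS hiT)) hm1
      have h3 : delta B m i = (x : Gspace B) i := by
        show ((m : ℤ) : ZMod ((i : ℕ+) : ℕ)) = _
        rw [h2, ht (↑i) hiT]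
      rw [h3]
      exact mem_of_mem_nhds (hV i)
    have hδW : deltaH B m ∈ window B := hUsub hδU
    have hm0 : (((b0 : ℕ+) : ℕ) : ℤ) ∣ m := by simpa using hm2
    exact hδW ⟨b0, hb0⟩ ((ZMod.intCast_zmod_eq_zero_iff_dvd m _).2 hm0)
  · exact Set.iUnion_subset fun k => Vset_subset_interior _

lemma period_neg {M : Set ℤ} {a : ℤ} (ha : ∀ n, n + a ∈ M ↔ n ∈ M) :
    ∀ n, n + -a ∈ M ↔ n ∈ M := by
  intro n
  have h := ha (n + -a)
  rw [neg_add_cancel_right] at h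
  exact h.symm

lemma period_mul {M : Set ℤ} {a : ℤ} (ha : ∀ n, n + a ∈ M ↔ n ∈ M) (q : ℤ) :
    ∀ n, n + q * a ∈ M ↔ n ∈ M := by
  induction q using Int.induction_on with
  | zero => simp
  | succ q ih =>
    intro n
    have h1 : n + ((q : ℤ) + 1) * a = n + (q : ℤ) * a + a := by ring
    rw [h1]
    exact (ha _).trans (ih _)
  | pred q ih =>
    intro n
    have h1 : n + (-(q : ℤ) - 1) * a = n + -(q : ℤ) * a + -a := by ring
    rw [h1]
    exact (period_neg ha _).trans (ih _)

end Aux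

/-- Let `S 0 ⊆ S 1 ⊆ …` be a filtration of `B` by finite sets and, for each
`k`, let `c k` be the least positive integer whose translation leaves `M_{A_{S k}}`
invariant. Then the period group `H_{int(W)}` is trivial iff every `b ∈ B` divides some
`c n`. -/
theorem statement19 (B : Set ℕ+) (hB : B.Infinite)
    (S : ℕ → Finset ℕ+) (hmono : ∀ k, S k ⊆ S (k + 1))
    (hsub : ∀ k, ↑(S k) ⊆ B) (hcover : ∀ b ∈ B, ∃ k, b ∈ S k)
    (c : ℕ → ℕ)
    (hpos : ∀ k, 0 < c k)
    (hper : ∀ k, ∀ n : ℤ,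
      n + (c k : ℤ) ∈ MultSetN (ASet B (S k)) ↔ n ∈ MultSetN (ASet B (S k)))
    (hleast : ∀ k, ∀ c' : ℕ, 0 < c' →
      (∀ n : ℤ, n + (c' : ℤ) ∈ MultSetN (ASet B (S k)) ↔ n ∈ MultSetN (ASet B (S k))) →
      c k ≤ c') :
    {h : Hspace B | (fun w => w + h) '' interior (window B) = interior (window B)} = {0} ↔
      ∀ b ∈ B, ∃ n : ℕ, (b : ℕ) ∣ c n := by
  classical
  have hSmono : Monotone S := monotone_nat_of_le_succ hmono
  have hintW := interior_window_eq S hmono hsub hcover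
  -- least period divides any period
  have hdvd_of_period : ∀ k (t : ℤ),
      (∀ n : ℤ, n + t ∈ MultSetN (ASet B (S k)) ↔ n ∈ MultSetN (ASet B (S k))) →
      ((c k : ℕ) : ℤ) ∣ t := by
    intro k t hp
    have hc0 : (0:ℤ) < ((c k : ℕ) : ℤ) := by exact_mod_cast hpos k
    have h0 : 0 ≤ t % ((c k : ℕ) : ℤ) := Int.emod_nonneg t hc0.ne'
    have h1 : t % ((c k : ℕ) : ℤ) < ((c k : ℕ) : ℤ) := Int.emod_lt_of_pos t hc0
    have hpr : ∀ n : ℤ, n + t % ((c k : ℕ) : ℤ) ∈ MultSetN (ASet B (S k)) ↔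
        n ∈ MultSetN (ASet B (S k)) := by
      intro n
      have e : n + t % ((c k : ℕ) : ℤ)
          = (n + t) + (-(t / ((c k : ℕ) : ℤ))) * ((c k : ℕ) : ℤ) := by
        rw [Int.emod_def]; ring
      rw [e]
      exact (period_mul (hper k) _ _).trans (hp n)
    by_cases hr : t % ((c k : ℕ) : ℤ) = 0
    · exact Int.dvd_of_emod_eq_zero hr
    · exfalso
      have hrpos : 0 < t % ((c k : ℕ) : ℤ) := lt_of_le_of_ne h0 (Ne.symm hr)
      have hle := hleast k (t % ((c k : ℕ) : ℤ)).toNat (by omega) ?_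
      · omega
      · intro n
        have e2 : (((t % ((c k : ℕ) : ℤ)).toNat : ℕ) : ℤ) = t % ((c k : ℕ) : ℤ) :=
          Int.toNat_of_nonneg h0
        rw [e2]
        exact hpr n
  have hLdvd : ∀ j m, j ≤ m → lcmS (S j) ∣ lcmS (S m) :=
    fun j m hjm => lcmS_dvd_of_subset (hSmono hjm)
  -- M_k is determined by M_{k+1} modulo lcm(S k)
  have hMstep : ∀ k (n : ℤ), n ∈ MultSetN (ASet B (S k)) ↔
      ∃ n' : ℤ, n' ∈ MultSetN (ASet B (S (k+1))) ∧ ((lcmS (S k) : ℕ) : ℤ) ∣ n - n' := by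
    intro k n
    constructor
    · intro hn
      obtain ⟨b, hb, hg⟩ := mem_MultSetN_ASet.1 hn
      have hgeq : Nat.gcd (lcmS (S k)) (Nat.gcd (b:ℕ) (lcmS (S (k+1)))) = Nat.gcd (b:ℕ) (lcmS (S k)) := by
        rw [← Nat.gcd_assoc, Nat.gcd_comm (lcmS (S k)) (b:ℕ)]
        exact Nat.gcd_eq_left ((Nat.gcd_dvd_right _ _).trans (hLdvd k (k+1) (Nat.le_succ k)))
      have hcompat : (Int.gcd ((lcmS (S k) : ℕ):ℤ) ((Nat.gcd (b:ℕ) (lcmS (S (k+1))) : ℕ):ℤ) : ℤ) ∣ n - 0 := by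
        rw [Int.gcd_natCast_natCast, hgeq]
        simpa using hg
      obtain ⟨n', h1, h2⟩ := exists_crt _ _ n 0 hcompat
      refine ⟨n', mem_MultSetN_ASet.2 ⟨b, hb, by simpa using h2⟩, dvd_sub_comm.mp h1⟩
    · rintro ⟨n', hn', hdvd⟩
      obtain ⟨b, hb, hg⟩ := mem_MultSetN_ASet.1 hn'
      refine mem_MultSetN_ASet.2 ⟨b, hb, ?_⟩
      have hgd : ((Nat.gcd (b:ℕ) (lcmS (S k)) : ℕ):ℤ) ∣ n' :=
        dvd_trans (Int.natCast_dvd_natCast.2 (Nat.dvd_gcd (Nat.gcd_dvd_left _ _)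
          ((Nat.gcd_dvd_right _ _).trans (hLdvd k (k+1) (Nat.le_succ k))))) hg
      have h2 : ((Nat.gcd (b:ℕ) (lcmS (S k)) : ℕ):ℤ) ∣ n - n' :=
        dvd_trans (Int.natCast_dvd_natCast.2 (Nat.gcd_dvd_right _ _)) hdvd
      simpa using dvd_add hgd h2
  have hchain1 : ∀ k, c k ∣ c (k+1) := by
    intro k
    have hp : ∀ n : ℤ, n + ((c (k+1) : ℕ) : ℤ) ∈ MultSetN (ASet B (S k)) ↔
        n ∈ MultSetN (ASet B (S k)) := by
      intro n
      rw [hMstep k, hMstep k]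
      constructor
      · rintro ⟨n', hn', hd⟩
        refine ⟨n' - ((c (k+1) : ℕ):ℤ), ?_, ?_⟩
        · have h := hper (k+1) (n' - ((c (k+1) : ℕ):ℤ))
          rw [sub_add_cancel] at h
          exact h.mp hn'
        · have e : n - (n' - ((c (k+1) : ℕ):ℤ)) = (n + ((c (k+1) : ℕ):ℤ)) - n' := by ring
          rw [e]; exact hd
      · rintro ⟨n', hn', hd⟩
        refine ⟨n' + ((c (k+1) : ℕ):ℤ), (hper (k+1) n').2 hn', ?_⟩
        have e : n + ((c (k+1) : ℕ):ℤ) - (n' + ((c (k+1) : ℕ):ℤ)) = n - n' := by ring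
        rw [e]; exact hd
    exact Int.natCast_dvd_natCast.1 (hdvd_of_period k _ hp)
  have hchain : ∀ j m, j ≤ m → c j ∣ c m := by
    intro j m hjm
    induction m, hjm using Nat.le_induction with
    | base => exact dvd_refl _
    | succ m hm ih => exact ih.trans (hchain1 m)
  have hcperiod : ∀ j m, j ≤ m → ∀ n : ℤ, n + ((c m : ℕ):ℤ) ∈ MultSetN (ASet B (S j)) ↔
      n ∈ MultSetN (ASet B (S j)) := by
    intro j m hjm n
    obtain ⟨q, hq⟩ := hchain j m hjm
    have e : ((c m : ℕ) : ℤ) = (q : ℤ) * ((c j : ℕ):ℤ) := by rw [hq]; push_cast; ring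
    rw [e]
    exact period_mul (hper j) q n
  constructor
  · -- trivial period group → every b divides some c n
    intro hset b hb
    by_contra hndvd
    rw [not_exists] at hndvd
    obtain ⟨h, hcl⟩ := exists_clusterPt_of_compactSpace
      (Filter.map (fun m => deltaH B ((c m : ℕ):ℤ)) Filter.atTop)
    have hext : ∀ k a, ∃ m, a ≤ m ∧ ∀ b' (hb' : b' ∈ S k),
        (h : Gspace B) ⟨b', hsub k hb'⟩ = (((c m : ℕ):ℤ) : ZMod ((b' : ℕ+):ℕ)) := by
      intro k a
      have heq : {y : Hspace B | ∀ b' (hb' : b' ∈ S k),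
          (y : Gspace B) ⟨b', hsub k hb'⟩ = (h : Gspace B) ⟨b', hsub k hb'⟩}
          = Subtype.val ⁻¹' (⋂ (b' : {b : ℕ+ // b ∈ S k}),
            (fun g : Gspace B => g ⟨b'.1, hsub k b'.2⟩) ⁻¹'
              {(h : Gspace B) ⟨b'.1, hsub k b'.2⟩}) := by
        ext y
        simp only [Set.mem_preimage, Set.mem_iInter, Set.mem_setOf_eq, Set.mem_singleton_iff]
        exact ⟨fun hy b' => hy b'.1 b'.2, fun hy b' hb' => hy ⟨b', hb'⟩⟩
      have hnbhd : {y : Hspace B | ∀ b' (hb' : b' ∈ S k),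
          (y : Gspace B) ⟨b', hsub k hb'⟩ = (h : Gspace B) ⟨b', hsub k hb'⟩} ∈ 𝓝 h := by
        apply IsOpen.mem_nhds
        · rw [heq]
          exact IsOpen.preimage continuous_subtype_val
            (isOpen_iInter_of_finite fun b' =>
              IsOpen.preimage (continuous_apply _) (isOpen_discrete _))
        · intro b' hb'; rfl
      have hfreq : ∃ᶠ m in Filter.atTop, ∀ b' (hb' : b' ∈ S k),
          ((deltaH B ((c m : ℕ):ℤ)) : Gspace B) ⟨b', hsub k hb'⟩
            = (h : Gspace B) ⟨b', hsub k hb'⟩ := by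
        have := Filter.inf_neBot_iff_frequently_left.1 hcl.neBot
          (Filter.eventually_of_mem hnbhd fun y hy => hy)
        rwa [Filter.frequently_map] at this
      obtain ⟨m, hma, hmem⟩ := Filter.frequently_atTop.1 hfreq a
      exact ⟨m, hma, fun b' hb' => (hmem b' hb').symm⟩
    -- h is a period of the interior of the window
    have himg : (fun w => w + h) '' interior (window B) = interior (window B) := by
      rw [hintW]
      apply subset_antisymm
      · rintro _ ⟨x, hx, rfl⟩
        obtain ⟨k, t, hlift, hfree⟩ := Set.mem_iUnion.1 hx
        obtain ⟨m, hkm, hm⟩ := hext k k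
        refine Set.mem_iUnion.2 ⟨k, t + ((c m : ℕ):ℤ), ?_, ?_⟩
        · intro b' hb'
          have hadd : ((x + h : Hspace B) : Gspace B) ⟨b', hsub k hb'⟩
              = (x : Gspace B) ⟨b', hsub k hb'⟩ + (h : Gspace B) ⟨b', hsub k hb'⟩ := rfl
          rw [hadd, hlift b' hb', hm b' hb']
          push_cast
          ring
        · intro hmem'
          exact hfree ((hcperiod k m hkm t).1 hmem')
      · intro y hy
        obtain ⟨k, t, hlift, hfree⟩ := Set.mem_iUnion.1 hy
        obtain ⟨m, hkm, hm⟩ := hext k k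
        refine ⟨y - h, ?_, by simp⟩
        refine Set.mem_iUnion.2 ⟨k, t - ((c m : ℕ):ℤ), ?_, ?_⟩
        · intro b' hb'
          have hsubc : ((y - h : Hspace B) : Gspace B) ⟨b', hsub k hb'⟩
              = (y : Gspace B) ⟨b', hsub k hb'⟩ - (h : Gspace B) ⟨b', hsub k hb'⟩ := rfl
          rw [hsubc, hlift b' hb', hm b' hb']
          push_cast
          ring
        · intro hmem'
          apply hfree
          have hiff2 := hcperiod k m hkm (t - ((c m : ℕ):ℤ))
          rw [sub_add_cancel] at hiff2
          exact hiff2.mpr hmem'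
    have h0 : h = 0 := by
      have hmem0 : h ∈ ({h : Hspace B |
          (fun w => w + h) '' interior (window B) = interior (window B)}) := himg
      rw [hset] at hmem0
      exact hmem0
    obtain ⟨k0, hk0⟩ := hcover b hb
    obtain ⟨m, _, hmc⟩ := hext k0 k0
    have hb0 : (h : Gspace B) ⟨b, hb⟩ = (((c m : ℕ):ℤ) : ZMod ((b:ℕ+):ℕ)) := hmc b hk0
    rw [h0] at hb0
    have hz : (((c m : ℕ):ℤ) : ZMod ((b:ℕ+):ℕ)) = 0 := hb0.symm
    rw [ZMod.intCast_zmod_eq_zero_iff_dvd] at hz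
    exact hndvd m (Int.natCast_dvd_natCast.1 hz)
  · -- every b divides some c n → trivial period group
    intro hrhs
    rw [Set.eq_singleton_iff_unique_mem]
    constructor
    · show (fun w => w + (0 : Hspace B)) '' interior (window B) = interior (window B)
      have e : (fun w : Hspace B => w + (0:Hspace B)) = id := funext fun w => add_zero w
      rw [e, Set.image_id]
    · intro h hhm
      have hiff : ∀ x : Hspace B, x ∈ interior (window B) ↔ x + h ∈ interior (window B) := by
        intro x
        constructor
        · intro hx
          rw [← hhm]
          exact ⟨x, hx, rfl⟩
        · intro hx
          rw [← hhm] at hx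
          obtain ⟨y, hy, hyx⟩ := hx
          have : y = x := add_right_cancel hyx
          exact this ▸ hy
      have hiffneg : ∀ x : Hspace B, x ∈ interior (window B) ↔ x + -h ∈ interior (window B) := by
        intro x
        have h2 := hiff (x + -h)
        rw [neg_add_cancel_right] at h2
        exact h2.symm
      have keystep : ∀ (h' : Hspace B),
          (∀ x : Hspace B, x ∈ interior (window B) ↔ x + h' ∈ interior (window B)) →
          ∀ k (t : ℤ), (∀ b' (hb' : b' ∈ S k),
            (h' : Gspace B) ⟨b', hsub k hb'⟩ = ((t:ℤ) : ZMod ((b':ℕ+):ℕ))) →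
          ∀ n : ℤ, n ∉ MultSetN (ASet B (S k)) → n + t ∉ MultSetN (ASet B (S k)) := by
        intro h' hiff' k t hlift n hn hnt
        obtain ⟨b0, hb0, hdvd⟩ := mem_MultSetN_ASet.1 hnt
        have hins : ↑(insert b0 (S k)) ⊆ B := by
          intro cc hcc
          rw [Finset.coe_insert, Set.mem_insert_iff] at hcc
          rcases hcc with rfl | hcc
          · exact hb0
          · exact hsub k hcc
        obtain ⟨t', hlift'⟩ := exists_lift (insert b0 (S k)) hins h'
        have htt' : ((lcmS (S k) : ℕ):ℤ) ∣ t - t' :=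
          lift_unique (hsub k) h' hlift fun cc hcc => hlift' cc (Finset.mem_insert_of_mem hcc)
        have hcompat : (Int.gcd ((lcmS (S k):ℕ):ℤ) (((b0:ℕ+):ℕ):ℤ) : ℤ) ∣ n - (-t') := by
          rw [Int.gcd_natCast_natCast, Nat.gcd_comm]
          have h1 : ((Nat.gcd ((b0:ℕ+):ℕ) (lcmS (S k)) : ℕ):ℤ) ∣ n + t := hdvd
          have h2 : ((Nat.gcd ((b0:ℕ+):ℕ) (lcmS (S k)) : ℕ):ℤ) ∣ t - t' :=
            dvd_trans (Int.natCast_dvd_natCast.2 (Nat.gcd_dvd_right _ _)) htt'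
          have e : n - -t' = (n + t) - (t - t') := by ring
          rw [e]
          exact dvd_sub h1 h2
        obtain ⟨m, hm1, hm2⟩ := exists_crt _ _ n (-t') hcompat
        have hmnotM : m ∉ MultSetN (ASet B (S k)) := fun hmm => hn ((MultSetN_congr hm1).1 hmm)
        have hδ : deltaH B m ∈ interior (window B) := by
          rw [hintW]
          exact Set.mem_iUnion.2 ⟨k, m, fun b' hb' => rfl, hmnotM⟩
        have hδh := (hiff' _).1 hδ
        rw [hintW] at hδh
        obtain ⟨j, u, hulift, huM⟩ := Set.mem_iUnion.1 hδh
        have hins' : ↑(insert b0 (S j)) ⊆ B := by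
          intro cc hcc
          rw [Finset.coe_insert, Set.mem_insert_iff] at hcc
          rcases hcc with rfl | hcc
          · exact hb0
          · exact hsub j hcc
        obtain ⟨t'', hlift''⟩ := exists_lift (insert b0 (S j)) hins' h'
        have hlift2 : ∀ b' (hb' : b' ∈ S j),
            ((deltaH B m + h' : Hspace B) : Gspace B) ⟨b', hsub j hb'⟩
              = (((m + t'' : ℤ)) : ZMod ((b':ℕ+):ℕ)) := by
          intro b' hb'
          have e : ((deltaH B m + h' : Hspace B) : Gspace B) ⟨b', hsub j hb'⟩
              = ((m:ℤ) : ZMod ((b':ℕ+):ℕ)) + (h' : Gspace B) ⟨b', hsub j hb'⟩ := rfl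
          rw [e, hlift'' b' (Finset.mem_insert_of_mem hb')]
          push_cast
          ring
        have huu : ((lcmS (S j):ℕ):ℤ) ∣ u - (m + t'') := lift_unique (hsub j) _ hulift hlift2
        have hb0tt : (((b0:ℕ+):ℕ):ℤ) ∣ t'' - t' := by
          have e1 : (h' : Gspace B) ⟨b0, hb0⟩ = ((t'':ℤ) : ZMod ((b0:ℕ+):ℕ)) :=
            hlift'' b0 (Finset.mem_insert_self _ _)
          have e2 : (h' : Gspace B) ⟨b0, hb0⟩ = ((t':ℤ) : ZMod ((b0:ℕ+):ℕ)) :=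
            hlift' b0 (Finset.mem_insert_self _ _)
          have e3 := e1.symm.trans e2
          rw [ZMod.intCast_eq_intCast_iff] at e3
          exact Int.ModEq.dvd e3.symm
        apply huM
        refine mem_MultSetN_ASet.2 ⟨b0, hb0, ?_⟩
        have hg1 : ((Nat.gcd ((b0:ℕ+):ℕ) (lcmS (S j)) :ℕ):ℤ) ∣ m + t'' := by
          refine dvd_trans (Int.natCast_dvd_natCast.2 (Nat.gcd_dvd_left _ _)) ?_
          have e : m + t'' = (m - -t') + (t'' - t') := by ring
          rw [e]
          exact dvd_add hm2 hb0tt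
        have hg2 : ((Nat.gcd ((b0:ℕ+):ℕ) (lcmS (S j)):ℕ):ℤ) ∣ u - (m + t'') :=
          dvd_trans (Int.natCast_dvd_natCast.2 (Nat.gcd_dvd_right _ _)) huu
        simpa using dvd_add hg1 hg2
      have hck : ∀ k (t : ℤ), (∀ b' (hb' : b' ∈ S k),
          (h : Gspace B) ⟨b', hsub k hb'⟩ = ((t:ℤ):ZMod ((b':ℕ+):ℕ))) → ((c k:ℕ):ℤ) ∣ t := by
        intro k t hlift
        apply hdvd_of_period k t
        intro n
        constructor
        · intro hnt
          by_contra hn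
          exact keystep h hiff k t hlift n hn hnt
        · intro hn
          by_contra hnt
          have hliftneg : ∀ b' (hb' : b' ∈ S k),
              ((-h : Hspace B) : Gspace B) ⟨b', hsub k hb'⟩ = (((-t : ℤ)) : ZMod ((b':ℕ+):ℕ)) := by
            intro b' hb'
            have e : ((-h : Hspace B) : Gspace B) ⟨b', hsub k hb'⟩
                = -((h : Gspace B) ⟨b', hsub k hb'⟩) := rfl
            rw [e, hlift b' hb']
            push_cast
            ring
          have hks := keystep (-h) hiffneg k (-t) hliftneg (n + t) hnt
          rw [add_neg_cancel_right] at hks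
          exact hks hn
      apply Subtype.ext
      funext bb
      obtain ⟨k0, hk0⟩ := hcover (↑bb) bb.2
      obtain ⟨n0, hn0⟩ := hrhs (↑bb) bb.2
      obtain ⟨t, ht⟩ := exists_lift (S (max k0 n0)) (hsub _) h
      have hct := hck (max k0 n0) t ht
      have hbt : (((bb:ℕ+):ℕ):ℤ) ∣ t := by
        refine dvd_trans ?_ hct
        exact Int.natCast_dvd_natCast.2 (hn0.trans (hchain n0 (max k0 n0) (le_max_right _ _)))
      have hcoord : (h : Gspace B) bb = ((t:ℤ) : ZMod ((bb:ℕ+):ℕ)) :=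
        ht (↑bb) (hSmono (le_max_left k0 n0) hk0)
      show (h : Gspace B) bb = ((0 : Hspace B) : Gspace B) bb
      have hz : ((0 : Hspace B) : Gspace B) bb = 0 := rfl
      rw [hz, hcoord]
      exact (ZMod.intCast_zmod_eq_zero_iff_dvd t _).2 hbt



end BFree
end
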